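/- Let n ≥ 2. There exist constants 0 < c ≤ C, depending only on n, such that for every 0 < a ≤ 2: c ln(1 + a^{-n/2}) ≤ ∫_0^1 t^{n-1}/(t² + a)^{n/2} dt ≤ C ln(1 + a^{-n/2}). -/

import Mathlib

open Real MeasureTheory intervalIntegral

section Stmt17Aux

variable {n : ℕ}

lemma aux_cont (hn : 2 ≤ n) {a : ℝ} (ha : 0 < a) :
    Continuous (fun t : ℝ => t ^ ((n:ℝ) - 1) / (t ^ 2 + a) ^ ((n:ℝ)/2)) := by
  have hn1 : (1:ℝ) ≤ (n:ℝ) := by exact_mod_cast Nat.one_le_of_lt hn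
  apply Continuous.div
  · exact continuous_id.rpow_const (fun x => Or.inr (by linarith))
  · exact ((continuous_pow 2).add continuous_const).rpow_const
      (fun x => Or.inl (by positivity : x ^ 2 + a ≠ 0))
  · intro x
    exact (Real.rpow_pos_of_pos (by positivity) _).ne'

lemma aux_int_rpow (hn : 2 ≤ n) (m : ℝ) :
    ∫ t in (0:ℝ)..m, t ^ ((n:ℝ) - 1) = m ^ (n:ℝ) / n := by
  have hn1 : (1:ℝ) ≤ (n:ℝ) := by exact_mod_cast Nat.one_le_of_lt hn
  rw [integral_rpow (Or.inl (by linarith))]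
  have h0 : (0:ℝ) ^ ((n:ℝ) - 1 + 1) = 0 := by
    rw [Real.zero_rpow (by linarith)]
  rw [h0]
  ring_nf

lemma aux_div_self (n : ℕ) {t : ℝ} (ht : 0 < t) :
    t ^ ((n:ℝ) - 1) / t ^ (n:ℝ) = 1 / t := by
  rw [← Real.rpow_sub ht]
  norm_num [Real.rpow_neg_one]

lemma aux_sq_rpow (n : ℕ) {t : ℝ} (ht : 0 ≤ t) :
    (t ^ 2) ^ ((n:ℝ)/2) = t ^ (n:ℝ) := by
  rw [← Real.rpow_natCast t 2, ← Real.rpow_mul ht,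
    show ((2:ℕ):ℝ) * ((n:ℝ)/2) = (n:ℝ) by push_cast; ring]

lemma aux_sqrt_rpow (n : ℕ) {a : ℝ} (ha : 0 ≤ a) :
    (Real.sqrt a) ^ (n:ℝ) = a ^ ((n:ℝ)/2) := by
  rw [Real.sqrt_eq_rpow, ← Real.rpow_mul ha,
    show 1 / 2 * (n:ℝ) = (n:ℝ)/2 by ring]

lemma aux_sqrt_inv_rpow (n : ℕ) {a : ℝ} (ha : 0 < a) :
    ((Real.sqrt a)⁻¹) ^ (n:ℝ) = a ^ (-((n:ℝ)/2)) := by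
  rw [Real.sqrt_eq_rpow, ← Real.rpow_neg ha.le, ← Real.rpow_mul ha.le,
    show -(1 / 2) * (n:ℝ) = -((n:ℝ)/2) by ring]

-- upper bound on [0, m], m ≤ √a
lemma aux_up1 (hn : 2 ≤ n) {a m : ℝ} (ha : 0 < a) (hm0 : 0 < m) (hma : m ≤ Real.sqrt a) :
    (∫ t in (0:ℝ)..m, t ^ ((n:ℝ) - 1) / (t ^ 2 + a) ^ ((n:ℝ)/2)) ≤ 1 / (n:ℝ) := by
  have hn1 : (1:ℝ) ≤ (n:ℝ) := by exact_mod_cast Nat.one_le_of_lt hn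
  have hn0 : (0:ℝ) < (n:ℝ) := by linarith
  have hν0 : (0:ℝ) < (n:ℝ)/2 := by linarith
  have haν : (0:ℝ) < a ^ ((n:ℝ)/2) := Real.rpow_pos_of_pos ha _
  have hstep : (∫ t in (0:ℝ)..m, t ^ ((n:ℝ) - 1) / (t ^ 2 + a) ^ ((n:ℝ)/2))
      ≤ ∫ t in (0:ℝ)..m, t ^ ((n:ℝ)-1) / a ^ ((n:ℝ)/2) := by
    refine integral_mono_on hm0.le ((aux_cont hn ha).intervalIntegrable _ _) ?_ ?_
    · apply ContinuousOn.intervalIntegrable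
      exact ((continuous_id.rpow_const (fun x => Or.inr (by linarith))).div_const _).continuousOn
    · intro t ht
      apply div_le_div_of_nonneg_left (Real.rpow_nonneg ht.1 _) haν
      exact Real.rpow_le_rpow ha.le (by nlinarith [sq_nonneg t]) hν0.le
  have hcomp : (∫ t in (0:ℝ)..m, t ^ ((n:ℝ)-1) / a ^ ((n:ℝ)/2))
      = m ^ (n:ℝ) / (n:ℝ) / a ^ ((n:ℝ)/2) := by
    rw [intervalIntegral.integral_div, aux_int_rpow hn]
  have hmn2 : m ^ (n:ℝ) ≤ a ^ ((n:ℝ)/2) := by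
    calc m ^ (n:ℝ) ≤ (Real.sqrt a) ^ (n:ℝ) := Real.rpow_le_rpow hm0.le hma (by positivity)
      _ = a ^ ((n:ℝ)/2) := aux_sqrt_rpow n ha.le
  calc (∫ t in (0:ℝ)..m, t ^ ((n:ℝ) - 1) / (t ^ 2 + a) ^ ((n:ℝ)/2))
      ≤ m ^ (n:ℝ) / (n:ℝ) / a ^ ((n:ℝ)/2) := by rw [← hcomp]; exact hstep
    _ ≤ a ^ ((n:ℝ)/2) / (n:ℝ) / a ^ ((n:ℝ)/2) := by gcongr
    _ = 1 / (n:ℝ) := by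
        rw [div_right_comm, div_self haν.ne']

-- upper bound on [m, 1]
lemma aux_up2 (hn : 2 ≤ n) {a m : ℝ} (ha : 0 < a) (hm0 : 0 < m) (hm1 : m ≤ 1) :
    (∫ t in m..(1:ℝ), t ^ ((n:ℝ) - 1) / (t ^ 2 + a) ^ ((n:ℝ)/2)) ≤ Real.log (1 / m) := by
  have hn1 : (1:ℝ) ≤ (n:ℝ) := by exact_mod_cast Nat.one_le_of_lt hn
  have hν0 : (0:ℝ) < (n:ℝ)/2 := by linarith
  have hinv_int : IntervalIntegrable (fun t : ℝ => 1 / t) volume m 1 := by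
    apply ContinuousOn.intervalIntegrable
    apply ContinuousOn.div continuousOn_const continuousOn_id
    intro x hx
    rcases Set.mem_uIcc.mp hx with h | h
    · exact (lt_of_lt_of_le hm0 h.1).ne'
    · exact (lt_of_lt_of_le one_pos h.1).ne'
  have hstep : (∫ t in m..(1:ℝ), t ^ ((n:ℝ) - 1) / (t ^ 2 + a) ^ ((n:ℝ)/2))
      ≤ ∫ t in m..(1:ℝ), 1 / t := by
    refine integral_mono_on hm1 ((aux_cont hn ha).intervalIntegrable _ _) hinv_int ?_
    intro t ht
    have ht0 : 0 < t := lt_of_lt_of_le hm0 ht.1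
    calc t ^ ((n:ℝ) - 1) / (t ^ 2 + a) ^ ((n:ℝ)/2)
        ≤ t ^ ((n:ℝ)-1) / (t^2) ^ ((n:ℝ)/2) := by
          apply div_le_div_of_nonneg_left (Real.rpow_nonneg ht0.le _)
            (Real.rpow_pos_of_pos (by positivity) _)
          exact Real.rpow_le_rpow (by positivity) (by linarith) hν0.le
      _ = 1 / t := by rw [aux_sq_rpow n ht0.le]; exact aux_div_self n ht0
  rwa [integral_one_div (by
    intro hmem
    rcases Set.mem_uIcc.mp hmem with h | h
    · exact absurd h.1 (not_le.mpr hm0)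
    · exact absurd h.1 (not_le.mpr one_pos))] at hstep

-- lower bound: constant
lemma aux_low1 (hn : 2 ≤ n) {a : ℝ} (ha : 0 < a) (ha2 : a ≤ 2) :
    (3:ℝ) ^ (-((n:ℝ)/2)) / (n:ℝ)
      ≤ ∫ t in (0:ℝ)..1, t ^ ((n:ℝ) - 1) / (t ^ 2 + a) ^ ((n:ℝ)/2) := by
  have hn1 : (1:ℝ) ≤ (n:ℝ) := by exact_mod_cast Nat.one_le_of_lt hn
  have hn0 : (0:ℝ) < (n:ℝ) := by linarith
  have hν0 : (0:ℝ) < (n:ℝ)/2 := by linarith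
  have h3ν : (0:ℝ) < (3:ℝ) ^ ((n:ℝ)/2) := Real.rpow_pos_of_pos (by norm_num) _
  have hstep : (∫ t in (0:ℝ)..1, t ^ ((n:ℝ)-1) / 3 ^ ((n:ℝ)/2))
      ≤ ∫ t in (0:ℝ)..1, t ^ ((n:ℝ) - 1) / (t ^ 2 + a) ^ ((n:ℝ)/2) := by
    refine integral_mono_on zero_le_one ?_ ((aux_cont hn ha).intervalIntegrable _ _) ?_
    · apply ContinuousOn.intervalIntegrable
      exact ((continuous_id.rpow_const (fun x => Or.inr (by linarith))).div_const _).continuousOn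
    · intro t ht
      apply div_le_div_of_nonneg_left (Real.rpow_nonneg ht.1 _)
        (Real.rpow_pos_of_pos (by positivity) _)
      apply Real.rpow_le_rpow (by positivity) (by nlinarith [ht.2, ht.1]) hν0.le
  have hcomp : (∫ t in (0:ℝ)..1, t ^ ((n:ℝ)-1) / 3 ^ ((n:ℝ)/2))
      = 3 ^ (-((n:ℝ)/2)) / (n:ℝ) := by
    rw [intervalIntegral.integral_div, aux_int_rpow hn, Real.one_rpow,
      Real.rpow_neg (by norm_num : (0:ℝ) ≤ 3), div_right_comm, one_div]
  linarith [hcomp ▸ hstep]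

-- lower bound: log part (case a ≤ 1)
lemma aux_low2 (hn : 2 ≤ n) {a : ℝ} (ha : 0 < a) (ha1 : a ≤ 1) :
    (2:ℝ) ^ (-((n:ℝ)/2)) * Real.log (1 / Real.sqrt a)
      ≤ ∫ t in (Real.sqrt a)..1, t ^ ((n:ℝ) - 1) / (t ^ 2 + a) ^ ((n:ℝ)/2) := by
  have hn1 : (1:ℝ) ≤ (n:ℝ) := by exact_mod_cast Nat.one_le_of_lt hn
  have hν0 : (0:ℝ) < (n:ℝ)/2 := by linarith
  have hsa : 0 < Real.sqrt a := Real.sqrt_pos.mpr ha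
  have hsa1 : Real.sqrt a ≤ 1 := by
    rw [show (1:ℝ) = Real.sqrt 1 by simp]
    exact Real.sqrt_le_sqrt ha1
  have h2ν : (0:ℝ) < (2:ℝ) ^ ((n:ℝ)/2) := Real.rpow_pos_of_pos (by norm_num) _
  have hinv_int : IntervalIntegrable (fun t : ℝ => 1 / t) volume (Real.sqrt a) 1 := by
    apply ContinuousOn.intervalIntegrable
    apply ContinuousOn.div continuousOn_const continuousOn_id
    intro x hx
    rcases Set.mem_uIcc.mp hx with h | h
    · exact (lt_of_lt_of_le hsa h.1).ne'
    · exact (lt_of_lt_of_le one_pos h.1).ne'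
  have hstep : (∫ t in (Real.sqrt a)..1, 2 ^ (-((n:ℝ)/2)) * (1 / t))
      ≤ ∫ t in (Real.sqrt a)..1, t ^ ((n:ℝ) - 1) / (t ^ 2 + a) ^ ((n:ℝ)/2) := by
    refine integral_mono_on hsa1 (hinv_int.const_mul _)
      ((aux_cont hn ha).intervalIntegrable _ _) ?_
    intro t ht
    have ht0 : 0 < t := lt_of_lt_of_le hsa ht.1
    have hat : a ≤ t ^ 2 := by
      nlinarith [Real.sq_sqrt ha.le, Real.sqrt_nonneg a, ht.1]
    have hkey : (t^2 + a) ^ ((n:ℝ)/2) ≤ 2 ^ ((n:ℝ)/2) * t ^ (n:ℝ) := by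
      calc (t^2 + a) ^ ((n:ℝ)/2) ≤ (2 * t^2) ^ ((n:ℝ)/2) :=
            Real.rpow_le_rpow (by positivity) (by linarith) hν0.le
        _ = 2 ^ ((n:ℝ)/2) * (t^2) ^ ((n:ℝ)/2) := Real.mul_rpow (by norm_num) (by positivity)
        _ = 2 ^ ((n:ℝ)/2) * t ^ (n:ℝ) := by rw [aux_sq_rpow n ht0.le]
    have htn : (0:ℝ) < t ^ (n:ℝ) := Real.rpow_pos_of_pos ht0 _
    have heq : t ^ ((n:ℝ)-1) / (2 ^ ((n:ℝ)/2) * t ^ (n:ℝ))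
        = 2 ^ (-((n:ℝ)/2)) * (1 / t) := by
      rw [Real.rpow_neg (by norm_num : (0:ℝ) ≤ 2),
        div_mul_eq_div_div_swap, aux_div_self n ht0]
      ring
    calc 2 ^ (-((n:ℝ)/2)) * (1 / t)
        = t ^ ((n:ℝ)-1) / (2 ^ ((n:ℝ)/2) * t ^ (n:ℝ)) := heq.symm
      _ ≤ t ^ ((n:ℝ) - 1) / (t ^ 2 + a) ^ ((n:ℝ)/2) :=
          div_le_div_of_nonneg_left (Real.rpow_nonneg ht0.le _)
            (Real.rpow_pos_of_pos (by positivity) _) hkey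
  have hcomp : (∫ t in (Real.sqrt a)..1, 2 ^ (-((n:ℝ)/2)) * (1 / t))
      = 2 ^ (-((n:ℝ)/2)) * Real.log (1 / Real.sqrt a) := by
    rw [intervalIntegral.integral_const_mul, integral_one_div (by
      intro hmem
      rcases Set.mem_uIcc.mp hmem with h | h
      · exact absurd h.1 (not_le.mpr hsa)
      · exact absurd h.1 (not_le.mpr one_pos))]
  linarith [hcomp ▸ hstep]

end Stmt17Aux

set_option maxHeartbeats 1000000 in
theorem stmt17 (n : ℕ) (hn : 2 ≤ n) :
    ∃ c C : ℝ, 0 < c ∧ c ≤ C ∧ ∀ a : ℝ, 0 < a → a ≤ 2 →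
      (c * Real.log (1 + a ^ (-(n : ℝ) / 2)) ≤
          ∫ t in (0 : ℝ)..1, t ^ ((n : ℝ) - 1) / (t ^ 2 + a) ^ ((n : ℝ) / 2)) ∧
      (∫ t in (0 : ℝ)..1, t ^ ((n : ℝ) - 1) / (t ^ 2 + a) ^ ((n : ℝ) / 2)) ≤
        C * Real.log (1 + a ^ (-(n : ℝ) / 2)) := by
  have hn1 : (1:ℝ) ≤ (n:ℝ) := by exact_mod_cast Nat.one_le_of_lt hn
  have hn0 : (0:ℝ) < (n:ℝ) := by linarith
  have hν0 : (0:ℝ) < (n:ℝ)/2 := by linarith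
  have hL0 : (0:ℝ) < Real.log (1 + 2 ^ (-((n:ℝ)/2))) := Real.log_pos (by
    have : (0:ℝ) < (2:ℝ) ^ (-((n:ℝ)/2)) := Real.rpow_pos_of_pos two_pos _
    linarith)
  have hlog2 : (0:ℝ) < Real.log 2 := Real.log_pos (by norm_num)
  have h3ν : (0:ℝ) < (3:ℝ) ^ ((n:ℝ)/2) := Real.rpow_pos_of_pos (by norm_num) _
  have h2ν : (0:ℝ) < (2:ℝ) ^ ((n:ℝ)/2) := Real.rpow_pos_of_pos (by norm_num) _
  set L : ℝ := Real.log (1 + 2 ^ (-((n:ℝ)/2))) with hLdef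
  set K : ℝ := (n:ℝ) * 3 ^ ((n:ℝ)/2) * Real.log 2 + (n:ℝ) * 2 ^ ((n:ℝ)/2) with hKdef
  have hK0 : (0:ℝ) < K := by positivity
  set c1 : ℝ := 1 / K with hc1def
  set C1 : ℝ := 1 / ((n:ℝ) * L) + 1 / (n:ℝ) with hC1def
  have hc10 : 0 < c1 := by positivity
  have hC10 : 0 < C1 := by positivity
  refine ⟨min c1 C1, max c1 C1, lt_min hc10 hC10, min_le_of_left_le (le_max_left _ _), ?_⟩
  intro a ha ha2
  have hexp : -(n:ℝ)/2 = -((n:ℝ)/2) := by ring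
  rw [hexp]
  have haν : (0:ℝ) < a ^ (-((n:ℝ)/2)) := Real.rpow_pos_of_pos ha _
  have hlognn : 0 ≤ Real.log (1 + a ^ (-((n:ℝ)/2))) := Real.log_nonneg (by linarith)
  set m : ℝ := min (Real.sqrt a) 1 with hmdef
  have hsa : 0 < Real.sqrt a := Real.sqrt_pos.mpr ha
  have hm0 : 0 < m := lt_min hsa one_pos
  have hm1 : m ≤ 1 := min_le_right _ _
  have hminv : 1 ≤ 1 / m := (le_div_iff₀ hm0).mpr (by linarith)
  have hlogm0 : 0 ≤ Real.log (1 / m) := Real.log_nonneg hminv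
  set f : ℝ → ℝ := fun t => t ^ ((n:ℝ) - 1) / (t ^ 2 + a) ^ ((n:ℝ)/2) with hfdef
  have hf_cont : Continuous f := aux_cont hn ha
  have hint : ∀ u v : ℝ, IntervalIntegrable f volume u v :=
    fun u v => hf_cont.intervalIntegrable u v
  have hf_nonneg : ∀ t : ℝ, 0 ≤ t → 0 ≤ f t := by
    intro t ht
    have h1 : (0:ℝ) < (t^2+a) ^ ((n:ℝ)/2) := Real.rpow_pos_of_pos (by positivity) _
    have h2 := Real.rpow_nonneg ht ((n:ℝ)-1)
    exact div_nonneg h2 h1.le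
  have hsplit : (∫ t in (0:ℝ)..1, f t) = (∫ t in (0:ℝ)..m, f t) + ∫ t in m..1, f t :=
    (integral_add_adjacent_intervals (hint 0 m) (hint m 1)).symm
  set I : ℝ := ∫ t in (0:ℝ)..1, f t with hIdef
  -- key identity when a ≤ 1
  have hmn : a ≤ 1 → (1 / m) ^ (n:ℝ) = a ^ (-((n:ℝ)/2)) := by
    intro ha1
    have hsa1 : Real.sqrt a ≤ 1 := by
      rw [show (1:ℝ) = Real.sqrt 1 by simp]
      exact Real.sqrt_le_sqrt ha1
    rw [hmdef, min_eq_left hsa1, one_div, aux_sqrt_inv_rpow n ha]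
  -- Ulog
  have hUlog : (n:ℝ) * Real.log (1 / m) ≤ Real.log (1 + a ^ (-((n:ℝ)/2))) := by
    rw [← Real.log_rpow (by positivity) (n:ℝ)]
    apply Real.log_le_log (Real.rpow_pos_of_pos (by positivity) _)
    rcases le_or_gt a 1 with ha1 | ha1
    · rw [hmn ha1]; linarith
    · have hsa1 : 1 ≤ Real.sqrt a := by
        rw [show (1:ℝ) = Real.sqrt 1 by simp]
        exact Real.sqrt_le_sqrt ha1.le
      rw [hmdef, min_eq_right hsa1]
      norm_num
      linarith
  -- Llog
  have hLlog : Real.log (1 + a ^ (-((n:ℝ)/2))) ≤ Real.log 2 + (n:ℝ) * Real.log (1 / m) := by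
    rcases le_or_gt a 1 with ha1 | ha1
    · have h1a : 1 ≤ a ^ (-((n:ℝ)/2)) := by
        have := Real.rpow_le_rpow_of_nonpos ha ha1 (neg_nonpos.mpr hν0.le)
        simpa using this
      have hstep : Real.log (1 + a ^ (-((n:ℝ)/2))) ≤ Real.log (2 * a ^ (-((n:ℝ)/2))) := by
        apply Real.log_le_log (by linarith)
        linarith
      rw [Real.log_mul (by norm_num) haν.ne'] at hstep
      have hlogeq : Real.log (a ^ (-((n:ℝ)/2))) = (n:ℝ) * Real.log (1 / m) := by
        rw [← hmn ha1, Real.log_rpow (by positivity)]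
      linarith [hlogeq ▸ hstep]
    · have h1a : a ^ (-((n:ℝ)/2)) ≤ 1 := by
        have := Real.rpow_le_rpow_of_nonpos one_pos ha1.le (neg_nonpos.mpr hν0.le)
        simpa using this
      have h2 : Real.log (1 + a ^ (-((n:ℝ)/2))) ≤ Real.log 2 :=
        Real.log_le_log (by linarith) (by linarith)
      nlinarith [hlogm0, hn0]
  -- logL
  have hlogL : L ≤ Real.log (1 + a ^ (-((n:ℝ)/2))) := by
    rw [hLdef]
    apply Real.log_le_log (by positivity)
    have := Real.rpow_le_rpow_of_nonpos ha ha2 (neg_nonpos.mpr hν0.le)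
    linarith
  -- upper pieces
  have hup1 : (∫ t in (0:ℝ)..m, f t) ≤ 1 / (n:ℝ) :=
    aux_up1 hn ha hm0 (min_le_left _ _)
  have hup2 : (∫ t in m..1, f t) ≤ Real.log (1 / m) := aux_up2 hn ha hm0 hm1
  -- lower pieces
  have hlow1 : (3:ℝ) ^ (-((n:ℝ)/2)) / (n:ℝ) ≤ I := aux_low1 hn ha ha2
  have hI2 : (2:ℝ) ^ (-((n:ℝ)/2)) * Real.log (1/m) ≤ I := by
    rcases le_or_gt a 1 with ha1 | ha1
    · have hsa1 : Real.sqrt a ≤ 1 := by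
        rw [show (1:ℝ) = Real.sqrt 1 by simp]
        exact Real.sqrt_le_sqrt ha1
      have hm_eq : m = Real.sqrt a := min_eq_left hsa1
      have hlow2 := aux_low2 hn ha ha1
      have h0m : (0:ℝ) ≤ ∫ t in (0:ℝ)..(Real.sqrt a), f t :=
        integral_nonneg (Real.sqrt_nonneg a) (fun t ht => hf_nonneg t ht.1)
      rw [hsplit, hm_eq]
      have he : (∫ t in (Real.sqrt a)..1, f t)
          = ∫ t in (Real.sqrt a)..1, t ^ ((n:ℝ) - 1) / (t ^ 2 + a) ^ ((n:ℝ)/2) := by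
        rw [hfdef]
      rw [he]
      linarith [hlow2, h0m]
    · have hsa1 : 1 ≤ Real.sqrt a := by
        rw [show (1:ℝ) = Real.sqrt 1 by simp]
        exact Real.sqrt_le_sqrt ha1.le
      have hm_eq : m = 1 := min_eq_right hsa1
      have hInn : 0 ≤ I :=
        integral_nonneg zero_le_one (fun t ht => hf_nonneg t ht.1)
      rw [hm_eq]
      simpa using hInn
  constructor
  · -- lower bound
    have h1 : 1 ≤ (n:ℝ) * 3 ^ ((n:ℝ)/2) * I := by
      have h := mul_le_mul_of_nonneg_left hlow1
        (by positivity : (0:ℝ) ≤ (n:ℝ) * 3 ^ ((n:ℝ)/2))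
      have e : (n:ℝ) * 3 ^ ((n:ℝ)/2) * (3 ^ (-((n:ℝ)/2)) / (n:ℝ)) = 1 := by
        rw [Real.rpow_neg (by norm_num : (0:ℝ) ≤ 3)]
        field_simp
      linarith [e ▸ h]
    have h2 : Real.log (1/m) ≤ 2 ^ ((n:ℝ)/2) * I := by
      have h := mul_le_mul_of_nonneg_left hI2 h2ν.le
      rw [← mul_assoc, Real.rpow_neg (by norm_num : (0:ℝ) ≤ 2),
        mul_inv_cancel₀ h2ν.ne', one_mul] at h
      exact h
    have hKI : Real.log (1 + a ^ (-((n:ℝ)/2))) ≤ K * I := by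
      have t1 : Real.log 2 ≤ (n:ℝ) * 3 ^ ((n:ℝ)/2) * Real.log 2 * I := by
        have := mul_le_mul_of_nonneg_left h1 hlog2.le
        linarith [this]
      have t2 : (n:ℝ) * Real.log (1/m) ≤ (n:ℝ) * 2 ^ ((n:ℝ)/2) * I := by
        have := mul_le_mul_of_nonneg_left h2 hn0.le
        linarith [this]
      calc Real.log (1 + a ^ (-((n:ℝ)/2)))
          ≤ Real.log 2 + (n:ℝ) * Real.log (1/m) := hLlog
        _ ≤ (n:ℝ) * 3 ^ ((n:ℝ)/2) * Real.log 2 * I + (n:ℝ) * 2 ^ ((n:ℝ)/2) * I := by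
            linarith
        _ = K * I := by rw [hKdef]; ring
    calc min c1 C1 * Real.log (1 + a ^ (-((n:ℝ)/2)))
        ≤ c1 * Real.log (1 + a ^ (-((n:ℝ)/2))) :=
          mul_le_mul_of_nonneg_right (min_le_left _ _) hlognn
      _ ≤ c1 * (K * I) := mul_le_mul_of_nonneg_left hKI hc10.le
      _ = I := by rw [hc1def]; field_simp
  · -- upper bound
    have hIup : I ≤ 1/(n:ℝ) + Real.log (1/m) := by
      rw [hsplit]; linarith
    have h1 : 1/(n:ℝ) ≤ 1/((n:ℝ)*L) * Real.log (1 + a ^ (-((n:ℝ)/2))) := by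
      rw [div_mul_eq_mul_div, le_div_iff₀ (by positivity)]
      calc 1/(n:ℝ) * ((n:ℝ)*L) = L := by field_simp
        _ ≤ Real.log (1 + a ^ (-((n:ℝ)/2))) := hlogL
        _ = 1 * Real.log (1 + a ^ (-((n:ℝ)/2))) := (one_mul _).symm
    have h2 : Real.log (1/m) ≤ 1/(n:ℝ) * Real.log (1 + a ^ (-((n:ℝ)/2))) := by
      rw [div_mul_eq_mul_div, le_div_iff₀ hn0, mul_comm]
      linarith [hUlog]
    calc I ≤ 1/(n:ℝ) + Real.log (1/m) := hIup
      _ ≤ 1/((n:ℝ)*L) * Real.log (1 + a ^ (-((n:ℝ)/2)))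
            + 1/(n:ℝ) * Real.log (1 + a ^ (-((n:ℝ)/2))) := by linarith
      _ = C1 * Real.log (1 + a ^ (-((n:ℝ)/2))) := by rw [hC1def]; ring
      _ ≤ max c1 C1 * Real.log (1 + a ^ (-((n:ℝ)/2))) :=
          mul_le_mul_of_nonneg_right (le_max_right _ _) hlognn
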